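/- Chen's identity: if X: [0,s] → E and Y: [s,t] → E are continuous paths of finite 1-variation and X*Y denotes their concatenation (defined by (X*Y)_u = X_u for u ∈ [0,s] and (X*Y)_u = X_s + Y_u - Y_s for u ∈ [s,t]), then S(X*Y) = S(X) ⊗ S(Y) in the tensor algebra T((E)). -/

import Mathlib

open MeasureTheory Set

/-- Iterated integral of a path against its derivative; the head letter is integrated
outermost (so this corresponds to the reversed word). -/
noncomputable def iterInt {d : ℕ} (X : ℝ → Fin d → ℝ) (a : ℝ) : List (Fin d) → ℝ → ℝ
  | [], _ => 1
  | i :: I, b => ∫ u in a..b, iterInt X a I u * deriv (fun s => X s i) u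

/-- Coordinate iterated integral `π^I(S(X))` over `[a,b]` for the word `I = (i₁,…,iₙ)`
(innermost integration first). -/
noncomputable def sigCoord {d : ℕ} (X : ℝ → Fin d → ℝ) (a b : ℝ) (I : List (Fin d)) : ℝ :=
  iterInt X a I.reverse b

/-- The signature of a path over `[a,b]`, as the family of its coordinate iterated
integrals indexed by words; this represents an element of the tensor algebra `T((ℝ^d))`. -/
noncomputable def Sig {d : ℕ} (X : ℝ → Fin d → ℝ) (a b : ℝ) : List (Fin d) → ℝ :=
  fun I => sigCoord X a b I

/-- The product of the tensor algebra `T((ℝ^d))` in coordinates. -/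
noncomputable def tmul {d : ℕ} (x y : List (Fin d) → ℝ) : List (Fin d) → ℝ :=
  fun w => ∑ k ∈ Finset.range (w.length + 1), x (w.take k) * y (w.drop k)

/-- The unit of the tensor algebra. -/
def tunit {d : ℕ} : List (Fin d) → ℝ := fun w => if w = [] then 1 else 0

/-- The tensor exponential `exp(v) = Σ v^{⊗n}/n!` in coordinates. -/
noncomputable def texp {d : ℕ} (v : Fin d → ℝ) : List (Fin d) → ℝ :=
  fun w => (w.map v).prod / w.length.factorial

/-- The multiset of shuffles of two words. -/
def shuffles {α : Type*} : List α → List α → Multiset (List α)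
  | [], v => {v}
  | u, [] => {u}
  | a :: u, b :: v => ((shuffles u (b :: v)).map (a :: ·)) + ((shuffles (a :: u) v).map (b :: ·))
  termination_by u v => u.length + v.length

/-- `x` is in the range of the signature map on continuous bounded-variation paths. -/
def IsSignature {d : ℕ} (x : List (Fin d) → ℝ) : Prop :=
  ∃ (X : ℝ → Fin d → ℝ) (a b : ℝ), a ≤ b ∧ ContinuousOn X (Set.Icc a b) ∧
    BoundedVariationOn X (Set.Icc a b) ∧ x = Sig X a b

/-- Evaluation of a (finitely supported) linear form on `T((ℝ^d))`. -/
noncomputable def formEval {d : ℕ} (f : List (Fin d) →₀ ℝ) (x : List (Fin d) → ℝ) : ℝ :=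
  f.sum fun w c => c * x w

/-- The shuffle product of two linear forms, extended bilinearly from words. -/
noncomputable def shuffleForm {d : ℕ} (f g : List (Fin d) →₀ ℝ) : List (Fin d) →₀ ℝ :=
  f.sum fun u cu => g.sum fun v cv =>
    (cu * cv) • ((shuffles u v).map fun w => Finsupp.single w (1 : ℝ)).sum

lemma iterInt_nil {d : ℕ} (X : ℝ → Fin d → ℝ) (a b : ℝ) : iterInt X a [] b = 1 := rfl

lemma iterInt_cons {d : ℕ} (X : ℝ → Fin d → ℝ) (a b : ℝ) (i : Fin d) (I : List (Fin d)) :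
    iterInt X a (i :: I) b = ∫ u in a..b, iterInt X a I u * deriv (fun s => X s i) u := rfl

lemma mono_int {f : ℝ → ℝ} (hf : Monotone f) (a b : ℝ) :
    IntegrableOn (deriv f) (Icc a b) := by
  have h1 : ∀ᵐ x, deriv f x = (hf.stieltjesFunction.measure.rnDeriv volume x).toReal :=
    hf.ae_hasDerivAt.mono fun x hx => by rw [hx.deriv]
  have h2 : IntegrableOn (fun x => (hf.stieltjesFunction.measure.rnDeriv volume x).toReal)
      (Icc a b) := by
    refine ⟨(Measure.measurable_rnDeriv _ _).ennreal_toReal.aestronglyMeasurable, ?_⟩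
    apply hasFiniteIntegral_toReal_of_lintegral_ne_top
    exact ((Measure.setLIntegral_rnDeriv_le (Icc a b)).trans_lt
      isCompact_Icc.measure_lt_top).ne
  exact h2.congr (ae_restrict_of_ae (h1.mono fun x hx => hx.symm))

lemma bv_int {f : ℝ → ℝ} {a b : ℝ} (hab : a ≤ b) (h : BoundedVariationOn f (Icc a b)) :
    IntegrableOn (deriv f) (Ioo a b) := by
  obtain ⟨p, q, hp, hq, hf⟩ :=
    h.locallyBoundedVariationOn.exists_monotoneOn_sub_monotoneOn
  set P : ℝ → ℝ := fun x => p (min b (max a x)) with hP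
  set Q : ℝ → ℝ := fun x => q (min b (max a x)) with hQ
  have hmem : ∀ x, min b (max a x) ∈ Icc a b := fun x =>
    ⟨le_min hab (le_max_left a x), min_le_left _ _⟩
  have hPm : Monotone P := fun x y hxy =>
    hp (hmem x) (hmem y) (min_le_min le_rfl (max_le_max le_rfl hxy))
  have hQm : Monotone Q := fun x y hxy =>
    hq (hmem x) (hmem y) (min_le_min le_rfl (max_le_max le_rfl hxy))
  have heq : ∀ u ∈ Ioo a b, deriv f u = deriv (P - Q) u := by
    intro u hu
    apply Filter.EventuallyEq.deriv_eq
    filter_upwards [Ioo_mem_nhds hu.1 hu.2] with x hx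
    have : min b (max a x) = x := by
      rw [max_eq_right hx.1.le, min_eq_right hx.2.le]
    simp [hf, hP, hQ, this, Pi.sub_apply]
  have hae : ∀ᵐ u ∂(volume.restrict (Ioo a b)),
      deriv f u = deriv P u - deriv Q u := by
    filter_upwards [ae_restrict_of_ae hPm.ae_differentiableAt,
      ae_restrict_of_ae hQm.ae_differentiableAt,
      ae_restrict_mem measurableSet_Ioo] with u h1 h2 hu
    rw [heq u hu]
    have := deriv_sub h1 h2
    simpa using this
  have hint : IntegrableOn (fun u => deriv P u - deriv Q u) (Ioo a b) :=
    IntegrableOn.mono_set ((mono_int hPm a b).sub (mono_int hQm a b)) Ioo_subset_Icc_self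
  exact hint.congr (hae.mono fun x hx => hx.symm)

lemma bv_int_comp {d : ℕ} {X : ℝ → Fin d → ℝ} {a b : ℝ} (hab : a ≤ b)
    (h : BoundedVariationOn X (Icc a b)) (i : Fin d) :
    IntegrableOn (deriv fun u => X u i) (Ioo a b) := by
  apply bv_int hab
  exact (LipschitzWith.eval i).comp_boundedVariationOn h

lemma iterInt_good {d : ℕ} (X : ℝ → Fin d → ℝ) {a b : ℝ} (hab : a ≤ b)
    (hd : ∀ i, IntegrableOn (deriv fun u => X u i) (Ioo a b)) (I : List (Fin d)) :
    ContinuousOn (iterInt X a I) (Icc a b) ∧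
    ∀ i, IntegrableOn (fun u => iterInt X a I u * deriv (fun v => X v i) u) (Icc a b) := by
  induction I with
  | nil =>
    refine ⟨continuousOn_const, fun i => ?_⟩
    simp only [iterInt, one_mul]
    exact (integrableOn_Icc_iff_integrableOn_Ioo).mpr (hd i)
  | cons i I ih =>
    have hcont : ContinuousOn (iterInt X a (i :: I)) (Icc a b) := by
      have h1 : iterInt X a (i :: I)
          = fun b' => ∫ u in a..b', iterInt X a I u * deriv (fun v => X v i) u := rfl
      rw [h1, ← uIcc_of_le hab]
      exact intervalIntegral.continuousOn_primitive_interval ((uIcc_of_le hab) ▸ ih.2 i)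
    exact ⟨hcont, fun j => IntegrableOn.continuousOn_mul hcont
      ((integrableOn_Icc_iff_integrableOn_Ioo).mpr (hd j)) isCompact_Icc⟩

lemma ae_ne (b : ℝ) : ∀ᵐ u : ℝ, u ≠ b := by
  rw [ae_iff]
  simpa using measure_singleton (α := ℝ) b

lemma iterInt_congr {d : ℕ} {X W : ℝ → Fin d → ℝ} {a c : ℝ}
    (hd : ∀ i, ∀ u ∈ Ioo a c, deriv (fun v => X v i) u = deriv (fun v => W v i) u) :
    ∀ I : List (Fin d), ∀ b ∈ Icc a c, iterInt X a I b = iterInt W a I b := by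
  intro I
  induction I with
  | nil => intro b _; rfl
  | cons i I ih =>
    intro b hb
    rw [iterInt_cons, iterInt_cons]
    apply intervalIntegral.integral_congr_ae
    filter_upwards [ae_ne b] with u hub hu
    have hu' : u ∈ Ioc a b := by rwa [uIoc_of_le hb.1] at hu
    have huo : u ∈ Ioo a c := ⟨hu'.1, lt_of_lt_of_le (lt_of_le_of_ne hu'.2 hub) hb.2⟩
    rw [ih u ⟨hu'.1.le, huo.2.le⟩, hd i u huo]

lemma chen_core {d : ℕ} (Z X Y : ℝ → Fin d → ℝ) {s t : ℝ} (hs : 0 ≤ s) (hst : s ≤ t)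
    (hZint : ∀ i I, IntegrableOn (fun u => iterInt Z 0 I u * deriv (fun v => Z v i) u) (Icc 0 t))
    (hYint : ∀ i I, IntegrableOn (fun u => iterInt Y s I u * deriv (fun v => Y v i) u) (Icc s t))
    (hZX : ∀ I : List (Fin d), ∀ u ∈ Icc 0 s, iterInt Z 0 I u = iterInt X 0 I u)
    (hdY : ∀ i, ∀ u ∈ Ioo s t, deriv (fun v => Z v i) u = deriv (fun v => Y v i) u) :
    ∀ I : List (Fin d), ∀ b ∈ Icc s t,
      iterInt Z 0 I b = ∑ k ∈ Finset.range (I.length + 1),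
        iterInt Y s (I.take k) b * iterInt X 0 (I.drop k) s := by
  intro I
  induction I with
  | nil => intro b _; simp [iterInt_nil]
  | cons i I ih =>
    intro b hb
    have hsb : s ≤ b := hb.1
    have hbt : b ≤ t := hb.2
    have h1 : IntervalIntegrable (fun u => iterInt Z 0 I u * deriv (fun v => Z v i) u)
        volume 0 s :=
      (intervalIntegrable_iff_integrableOn_Icc_of_le hs).mpr
        ((hZint i I).mono_set (Icc_subset_Icc le_rfl hst))
    have h2 : IntervalIntegrable (fun u => iterInt Z 0 I u * deriv (fun v => Z v i) u)
        volume s b :=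
      (intervalIntegrable_iff_integrableOn_Icc_of_le hsb).mpr
        ((hZint i I).mono_set (Icc_subset_Icc hs hbt))
    have hsplit : iterInt Z 0 (i :: I) b = iterInt Z 0 (i :: I) s
        + ∫ u in s..b, iterInt Z 0 I u * deriv (fun v => Z v i) u := by
      rw [iterInt_cons, iterInt_cons, intervalIntegral.integral_add_adjacent_intervals h1 h2]
    have h3 : (∫ u in s..b, iterInt Z 0 I u * deriv (fun v => Z v i) u)
        = ∫ u in s..b, (∑ k ∈ Finset.range (I.length + 1),
            iterInt X 0 (I.drop k) s * (iterInt Y s (I.take k) u * deriv (fun v => Y v i) u)) := by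
      apply intervalIntegral.integral_congr_ae
      filter_upwards [ae_ne b] with u hub hu
      have hu' : u ∈ Ioc s b := by rwa [uIoc_of_le hsb] at hu
      have huo : u ∈ Ioo s t := ⟨hu'.1, lt_of_lt_of_le (lt_of_le_of_ne hu'.2 hub) hbt⟩
      rw [ih u ⟨hu'.1.le, huo.2.le⟩, hdY i u huo, Finset.sum_mul]
      exact Finset.sum_congr rfl fun k _ => by ring
    have h4 : (∫ u in s..b, (∑ k ∈ Finset.range (I.length + 1),
            iterInt X 0 (I.drop k) s * (iterInt Y s (I.take k) u * deriv (fun v => Y v i) u)))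
        = ∑ k ∈ Finset.range (I.length + 1),
            iterInt X 0 (I.drop k) s * iterInt Y s (i :: I.take k) b := by
      rw [intervalIntegral.integral_finset_sum]
      · exact Finset.sum_congr rfl fun k _ => by
          rw [intervalIntegral.integral_const_mul, iterInt_cons]
      · intro k _
        exact ((intervalIntegrable_iff_integrableOn_Icc_of_le hsb).mpr
          ((hYint i (I.take k)).mono_set (Icc_subset_Icc le_rfl hbt))).const_mul _
    rw [hsplit, h3, h4, hZX (i :: I) s ⟨hs, le_rfl⟩]
    have hR : ∑ k ∈ Finset.range ((i :: I).length + 1),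
        iterInt Y s (List.take k (i :: I)) b * iterInt X 0 (List.drop k (i :: I)) s
        = iterInt X 0 (i :: I) s + ∑ k ∈ Finset.range (I.length + 1),
            iterInt X 0 (List.drop k I) s * iterInt Y s (i :: List.take k I) b := by
      have hlen : (i :: I).length + 1 = (I.length + 1) + 1 := by simp
      rw [hlen, Finset.sum_range_succ']
      simp only [List.take_succ_cons, List.drop_succ_cons, List.take_zero, List.drop_zero,
        iterInt_nil, one_mul]
      rw [add_comm]
      congr 1
      exact Finset.sum_congr rfl fun k _ => by ring
    rw [hR]

/-- Chen's identity for the concatenation of two continuous paths of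
finite 1-variation. -/
theorem chen_identity {d : ℕ} (X Y : ℝ → Fin d → ℝ) (s t : ℝ) (hs : 0 ≤ s) (hst : s ≤ t)
    (hXc : ContinuousOn X (Set.Icc 0 s)) (hXv : BoundedVariationOn X (Set.Icc 0 s))
    (hYc : ContinuousOn Y (Set.Icc s t)) (hYv : BoundedVariationOn Y (Set.Icc s t)) :
    Sig (fun u => if u ≤ s then X u else fun i => X s i + Y u i - Y s i) 0 t
      = tmul (Sig X 0 s) (Sig Y s t) := by
  set Z : ℝ → Fin d → ℝ := fun u => if u ≤ s then X u else fun i => X s i + Y u i - Y s i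
    with hZ
  have hdX : ∀ i, ∀ u ∈ Ioo 0 s, deriv (fun v => Z v i) u = deriv (fun v => X v i) u := by
    intro i u hu
    apply Filter.EventuallyEq.deriv_eq
    filter_upwards [Iio_mem_nhds hu.2] with v hv
    have hv' : v ≤ s := le_of_lt hv
    simp [hZ, if_pos hv']
  have hdY : ∀ i, ∀ u ∈ Ioo s t, deriv (fun v => Z v i) u = deriv (fun v => Y v i) u := by
    intro i u hu
    have e1 : deriv (fun v => Z v i) u = deriv (fun v => Y v i + (X s i - Y s i)) u := by
      apply Filter.EventuallyEq.deriv_eq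
      filter_upwards [Ioi_mem_nhds hu.1] with v hv
      simp only [hZ, if_neg (not_le.mpr (mem_Ioi.mp hv))]
      ring
    rw [e1, deriv_add_const]
  have hXd : ∀ i, IntegrableOn (deriv fun u => X u i) (Ioo 0 s) :=
    fun i => bv_int_comp hs hXv i
  have hYd : ∀ i, IntegrableOn (deriv fun u => Y u i) (Ioo s t) :=
    fun i => bv_int_comp hst hYv i
  have hZd : ∀ i, IntegrableOn (deriv fun u => Z u i) (Ioo 0 t) := by
    intro i
    have e1 : IntegrableOn (deriv fun u => Z u i) (Ioo 0 s) :=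
      (hXd i).congr_fun (fun u hu => (hdX i u hu).symm) measurableSet_Ioo
    have e2 : IntegrableOn (deriv fun u => Z u i) (Ioo s t) :=
      (hYd i).congr_fun (fun u hu => (hdY i u hu).symm) measurableSet_Ioo
    have e3 : IntegrableOn (deriv fun u => Z u i) {s} := by
      rw [IntegrableOn, Measure.restrict_eq_zero.mpr (measure_singleton s)]
      exact integrable_zero_measure
    refine ((e1.union e3).union e2).mono_set ?_
    intro x hx
    rcases lt_trichotomy x s with h | h | h
    · exact Or.inl (Or.inl ⟨hx.1, h⟩)
    · exact Or.inl (Or.inr (by simp [h]))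
    · exact Or.inr ⟨h, hx.2⟩
  have hZX : ∀ I : List (Fin d), ∀ u ∈ Icc 0 s, iterInt Z 0 I u = iterInt X 0 I u :=
    iterInt_congr hdX
  have core := chen_core Z X Y hs hst
    (fun i I => (iterInt_good Z (hs.trans hst) hZd I).2 i)
    (fun i I => (iterInt_good Y hst hYd I).2 i) hZX hdY
  funext w
  show sigCoord Z 0 t w = _
  rw [sigCoord, core w.reverse t ⟨hst, le_rfl⟩]
  rw [List.length_reverse]
  unfold tmul Sig sigCoord
  rw [← Finset.sum_range_reflect
    (fun k => iterInt X 0 (w.take k).reverse s * iterInt Y s (w.drop k).reverse t)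
    (w.length + 1)]
  refine Finset.sum_congr rfl fun k hk => ?_
  have hk' : k ≤ w.length := Nat.lt_succ_iff.mp (Finset.mem_range.mp hk)
  simp only [Nat.add_sub_cancel]
  rw [List.reverse_take, List.reverse_drop, Nat.sub_sub_self hk']
  ring
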